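/- arXiv:2209.07649 — 4 statements merged into one kernel-verified Lean document; each statement's English description precedes it below -/
import Mathlib

section
/- For a complex number z with |z| < 1 and a complex number β with Re(β) > 0, one has β · ∫_0^1 t^{β−1}/(1 − z·t) dt = ∑_{k=0}^∞ (β/(β+k)) · z^k. -/
open Complex intervalIntegral MeasureTheory

theorem stmt_2 (z β : ℂ) (hz : ‖z‖ < 1) (hβ : 0 < β.re) :
    β * ∫ t in (0:ℝ)..1, Complex.exp ((β - 1) * Real.log t) / (1 - z * t) =
    ∑' k : ℕ, (β / (β + k)) * z ^ k := by
  have hβk : ∀ k : ℕ, (-1 : ℝ) < (β - 1 + (k : ℂ)).re := by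
    intro k
    simp only [Complex.add_re, Complex.sub_re, Complex.one_re, Complex.natCast_re]
    have : (0:ℝ) ≤ k := Nat.cast_nonneg k
    linarith
  have hβk0 : ∀ k : ℕ, β + (k : ℂ) ≠ 0 := by
    intro k h
    have h2 : (β + (k : ℂ)).re = 0 := by rw [h]; simp
    simp only [Complex.add_re, Complex.natCast_re] at h2
    have : (0:ℝ) ≤ k := Nat.cast_nonneg k
    linarith
  set F : ℕ → ℝ → ℂ := fun k t => z ^ k * (t : ℂ) ^ (β - 1 + (k : ℂ)) with hF
  -- integrability of each term
  have hFint : ∀ k : ℕ, IntegrableOn (F k) (Set.Ioc (0:ℝ) 1) volume := by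
    intro k
    have := (intervalIntegrable_cpow' (a := 0) (b := 1) (hβk k)).const_mul (z ^ k)
    rwa [intervalIntegrable_iff_integrableOn_Ioc_of_le zero_le_one] at this
  -- norm integrals
  have hnorm : ∀ k : ℕ, ∫ t in Set.Ioc (0:ℝ) 1, ‖F k t‖ =
      ‖z‖ ^ k * (1 / (β.re + k)) := by
    intro k
    have h1 : ∫ t in Set.Ioc (0:ℝ) 1, ‖F k t‖ =
        ∫ t in Set.Ioc (0:ℝ) 1, ‖z‖ ^ k * t ^ (β.re - 1 + k) := by
      refine setIntegral_congr_fun measurableSet_Ioc fun t ht => ?_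
      have ht0 : (0:ℝ) < t := ht.1
      simp only [hF, norm_mul, norm_pow]
      rw [Complex.norm_cpow_eq_rpow_re_of_pos ht0]
      simp only [Complex.add_re, Complex.sub_re, Complex.one_re, Complex.natCast_re]
    rw [h1, MeasureTheory.integral_const_mul]
    congr 1
    rw [← intervalIntegral.integral_of_le zero_le_one,
      integral_rpow (Or.inl (by have : (0:ℝ) ≤ k := Nat.cast_nonneg k; linarith))]
    rw [Real.one_rpow, Real.zero_rpow (by have : (0:ℝ) ≤ k := Nat.cast_nonneg k; intro h; linarith)]
    ring_nf
  -- summability of norm integrals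
  have hsum : Summable fun k : ℕ => ∫ t in Set.Ioc (0:ℝ) 1, ‖F k t‖ := by
    simp_rw [hnorm]
    refine Summable.of_nonneg_of_le (fun k => ?_) (fun k => ?_)
      ((summable_geometric_of_lt_one (norm_nonneg z) hz).mul_right (1 / β.re))
    · have : (0:ℝ) ≤ k := Nat.cast_nonneg k
      positivity
    · have hk : (0:ℝ) ≤ k := Nat.cast_nonneg k
      have : 1 / (β.re + k) ≤ 1 / β.re := by
        apply one_div_le_one_div_of_le hβ; linarith
      have h0 : (0:ℝ) ≤ ‖z‖ ^ k := by positivity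
      exact mul_le_mul_of_nonneg_left this h0
  -- value of each integral
  have hval : ∀ k : ℕ, ∫ t in Set.Ioc (0:ℝ) 1, F k t = z ^ k / (β + k) := by
    intro k
    rw [← intervalIntegral.integral_of_le zero_le_one]
    simp only [hF]
    rw [intervalIntegral.integral_const_mul, integral_cpow (Or.inl (hβk k))]
    have he : β - 1 + (k:ℂ) + 1 = β + k := by ring
    rw [he]
    push_cast
    rw [Complex.one_cpow, Complex.zero_cpow (hβk0 k), sub_zero, mul_one_div]
  -- rewrite the integrand as a tsum on Ioc 0 1
  have hint : (∫ t in (0:ℝ)..1, Complex.exp ((β - 1) * Real.log t) / (1 - z * t)) =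
      ∑' k : ℕ, z ^ k / (β + k) := by
    rw [intervalIntegral.integral_of_le zero_le_one]
    have hcongr : ∫ t in Set.Ioc (0:ℝ) 1, Complex.exp ((β - 1) * Real.log t) / (1 - z * t) =
        ∫ t in Set.Ioc (0:ℝ) 1, ∑' k : ℕ, F k t := by
      refine setIntegral_congr_fun measurableSet_Ioc fun t ht => ?_
      have ht0 : (0:ℝ) < t := ht.1
      have htne : (t : ℂ) ≠ 0 := Complex.ofReal_ne_zero.mpr ht0.ne'
      have hzt : ‖z * (t:ℂ)‖ < 1 := by
        rw [norm_mul, Complex.norm_real, Real.norm_eq_abs,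
          abs_of_pos ht0]
        calc ‖z‖ * t ≤ ‖z‖ * 1 :=
              mul_le_mul_of_nonneg_left ht.2 (norm_nonneg z)
          _ = ‖z‖ := mul_one _
          _ < 1 := hz
      have hexp : Complex.exp ((β - 1) * Real.log t) = (t : ℂ) ^ (β - 1) := by
        rw [Complex.cpow_def_of_ne_zero htne, ← Complex.ofReal_log ht0.le, mul_comm]
      have hgeom : ∑' k : ℕ, (z * (t:ℂ)) ^ k = (1 - z * t)⁻¹ :=
        tsum_geometric_of_norm_lt_one hzt
      have hterm : ∀ k : ℕ, F k t = (t:ℂ) ^ (β - 1) * (z * (t:ℂ)) ^ k := by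
        intro k
        simp only [hF]
        rw [Complex.cpow_add _ _ htne, Complex.cpow_natCast, mul_pow]
        ring
      rw [hexp, div_eq_mul_inv, ← hgeom, ← tsum_mul_left]
      exact tsum_congr fun k => (hterm k).symm
    rw [hcongr, ← integral_tsum_of_summable_integral_norm hFint hsum]
    exact tsum_congr hval
  rw [hint, ← tsum_mul_left]
  refine tsum_congr fun k => ?_
  ring
end

section
/- Let β ∈ ℂ with β ∉ ℤ_{≤0}, θ ∈ (0, 2π), and α ∈ ℂ with |α| > 1. Then ∫_θ^{θ+2π} (e^{iβt}/(e^{it} − α))·i·e^{it} dt = e^{iβθ}(e^{2πiβ} − 1)·(1/β)·(1 − ∑_{k=0}^∞ (β/(β+k))·(α^{−1}e^{iθ})^k). -/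
open Complex intervalIntegral

private lemma aux_norm_exp_I_mul (t : ℝ) : ‖Complex.exp (Complex.I * t)‖ = 1 := by
  simp [Complex.norm_exp]

private lemma aux_summable (β : ℂ) (hβn : ∀ k : ℕ, β + (k : ℂ) ≠ 0) (w : ℂ) (hw : ‖w‖ < 1) :
    Summable (fun k : ℕ => β / (β + k) * w ^ k) := by
  apply Summable.of_norm_bounded_eventually_nat
    (summable_geometric_of_lt_one (norm_nonneg w) hw)
  filter_upwards [Filter.eventually_ge_atTop (⌈2 * ‖β‖⌉₊)] with k hk
  have hk' : 2 * ‖β‖ ≤ (k : ℝ) := le_trans (Nat.le_ceil _) (by exact_mod_cast hk)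
  have h1 : (k : ℝ) - ‖β‖ ≤ ‖β + (k : ℂ)‖ := by
    have := norm_sub_norm_le ((k : ℂ)) (-β)
    simpa [sub_neg_eq_add, add_comm] using this
  have h2 : ‖β‖ ≤ ‖β + (k : ℂ)‖ := by linarith
  have h3 : (0 : ℝ) < ‖β + (k : ℂ)‖ := norm_pos_iff.2 (hβn k)
  rw [norm_mul, norm_div, norm_pow]
  have : ‖β‖ / ‖β + (k : ℂ)‖ ≤ 1 := (div_le_one h3).2 h2
  calc ‖β‖ / ‖β + (k : ℂ)‖ * ‖w‖ ^ k ≤ 1 * ‖w‖ ^ k := by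
        apply mul_le_mul_of_nonneg_right this (by positivity)
    _ = ‖w‖ ^ k := one_mul _

theorem stmt_6 (β : ℂ) (hβ : ∀ n : ℤ, n ≤ 0 → β ≠ n) (θ : ℝ) (hθ : θ ∈ Set.Ioo 0 (2 * Real.pi))
    (α : ℂ) (hα : 1 < ‖α‖) :
    ∫ t in θ..(θ + 2 * Real.pi),
        (Complex.exp (Complex.I * β * t) / (Complex.exp (Complex.I * t) - α)) *
          Complex.I * Complex.exp (Complex.I * t) =
    Complex.exp (Complex.I * β * θ) * (Complex.exp (2 * Real.pi * Complex.I * β) - 1) * (1 / β) *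
      (1 - ∑' k : ℕ, (β / (β + k)) * (α⁻¹ * Complex.exp (Complex.I * θ)) ^ k) := by
  obtain ⟨hθ0, hθ2⟩ := hθ
  have hπ := Real.pi_pos
  have hα0 : α ≠ 0 := by
    intro h; rw [h] at hα; simp at hα; linarith
  have hr : ‖(α⁻¹ : ℂ)‖ < 1 := by
    rw [norm_inv]
    exact inv_lt_one_of_one_lt₀ hα
  have hβ0 : β ≠ 0 := by simpa using hβ 0 le_rfl
  have hβn : ∀ k : ℕ, β + (k : ℂ) ≠ 0 := by
    intro k h
    refine hβ (-(k : ℤ)) (by simp) ?_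
    push_cast
    linear_combination h
  set E := Complex.exp (2 * Real.pi * Complex.I * β) with hE
  set w := α⁻¹ * Complex.exp (Complex.I * θ) with hwdef
  have hw : ‖w‖ < 1 := by
    rw [hwdef, norm_mul, aux_norm_exp_I_mul, mul_one]; exact hr
  set c : ℕ → ℂ := fun k => Complex.I * (β + 1 + k) with hcdef
  have hc : ∀ k, c k ≠ 0 := by
    intro k
    have h1 : β + 1 + (k : ℂ) ≠ 0 := by
      have := hβn (k + 1)
      push_cast at this
      intro h; exact this (by linear_combination h)
    exact mul_ne_zero Complex.I_ne_zero h1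
  set f : ℕ → ℝ → ℂ := fun k t => -Complex.I * (α⁻¹) ^ (k + 1) * Complex.exp (c k * t)
    with hfdef
  -- pointwise series expansion
  have hpt : ∀ t : ℝ,
      (Complex.exp (Complex.I * β * t) / (Complex.exp (Complex.I * t) - α)) *
        Complex.I * Complex.exp (Complex.I * t) = ∑' k : ℕ, f k t := by
    intro t
    set u := α⁻¹ * Complex.exp (Complex.I * t) with hudef
    have hu : ‖u‖ < 1 := by
      rw [hudef, norm_mul, aux_norm_exp_I_mul, mul_one]; exact hr
    have hone : (1 : ℂ) - u ≠ 0 := by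
      intro h; rw [sub_eq_zero] at h; rw [← h] at hu; simp at hu
    have hgeo : ∑' k : ℕ, u ^ k = (1 - u)⁻¹ := tsum_geometric_of_norm_lt_one hu
    have hden : Complex.exp (Complex.I * t) - α = -α * (1 - u) := by
      rw [hudef]; field_simp; ring
    have h2 : Complex.exp (Complex.I * (β + 1) * t)
        = Complex.exp (Complex.I * β * t) * Complex.exp (Complex.I * t) := by
      rw [← Complex.exp_add]; ring_nf
    have hterm : ∀ k : ℕ, f k t
        = (-Complex.I * α⁻¹ * Complex.exp (Complex.I * (β + 1) * t)) * u ^ k := by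
      intro k
      rw [hfdef, hudef]
      simp only []
      rw [mul_pow, ← Complex.exp_nat_mul]
      rw [show c k * (t : ℂ) = Complex.I * (β + 1) * t + k * (Complex.I * t) from by
        rw [hcdef]; push_cast; ring, Complex.exp_add, pow_succ]
      ring
    calc (Complex.exp (Complex.I * β * t) / (Complex.exp (Complex.I * t) - α)) *
          Complex.I * Complex.exp (Complex.I * t)
        = (-Complex.I * α⁻¹ * Complex.exp (Complex.I * (β + 1) * t)) * (1 - u)⁻¹ := by
          rw [hden, h2]
          field_simp
          try ring
      _ = (-Complex.I * α⁻¹ * Complex.exp (Complex.I * (β + 1) * t)) * ∑' k : ℕ, u ^ k := by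
          rw [hgeo]
      _ = ∑' k : ℕ, (-Complex.I * α⁻¹ * Complex.exp (Complex.I * (β + 1) * t)) * u ^ k := by
          rw [tsum_mul_left]
      _ = ∑' k : ℕ, f k t := by
          exact tsum_congr fun k => (hterm k).symm
  have hle : θ ≤ θ + 2 * Real.pi := by linarith
  have hcont : ∀ k, Continuous (f k) := by
    intro k
    exact (continuous_const.mul
      ((Complex.continuous_exp.comp (continuous_const.mul Complex.continuous_ofReal))))
  have hint : ∀ k, MeasureTheory.IntegrableOn (f k) (Set.Ioc θ (θ + 2 * Real.pi)) :=
    fun k => (hcont k).integrableOn_Ioc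
  set M : ℝ := Real.exp (|β.im| * (θ + 2 * Real.pi)) with hMdef
  have hM : ∀ k, ∀ t ∈ Set.Ioc θ (θ + 2 * Real.pi), ‖f k t‖ ≤ M * ‖(α⁻¹ : ℂ)‖ ^ (k + 1) := by
    intro k t ht
    rw [hfdef]
    simp only []
    rw [norm_mul, norm_mul, norm_neg, Complex.norm_I, one_mul, norm_pow]
    have hre : (c k * (t : ℂ)).re = -β.im * t := by
      rw [hcdef]
      simp [Complex.mul_re, Complex.add_re, Complex.add_im]
      try ring
    have : ‖Complex.exp (c k * t)‖ = Real.exp (-β.im * t) := by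
      rw [Complex.norm_exp, hre]
    rw [this]
    have ht1 : 0 < t := lt_trans hθ0 ht.1
    have ht2 : t ≤ θ + 2 * Real.pi := ht.2
    have hexp : Real.exp (-β.im * t) ≤ M := by
      rw [hMdef]
      apply Real.exp_le_exp.2
      have h1 : -β.im * t ≤ |β.im| * t := by
        apply mul_le_mul_of_nonneg_right _ (le_of_lt ht1)
        cases abs_cases β.im with
        | inl h => linarith [h.1, h.2]
        | inr h => linarith [h.1, h.2]
      calc -β.im * t ≤ |β.im| * t := h1
        _ ≤ |β.im| * (θ + 2 * Real.pi) :=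
            mul_le_mul_of_nonneg_left ht2 (abs_nonneg _)
    calc ‖(α⁻¹ : ℂ)‖ ^ (k + 1) * Real.exp (-β.im * t)
        ≤ ‖(α⁻¹ : ℂ)‖ ^ (k + 1) * M := mul_le_mul_of_nonneg_left hexp (by positivity)
      _ = M * ‖(α⁻¹ : ℂ)‖ ^ (k + 1) := mul_comm _ _
  have hvol : MeasureTheory.volume (Set.Ioc θ (θ + 2 * Real.pi)) < ⊤ :=
    measure_Ioc_lt_top
  have hsumnorm : Summable (fun k : ℕ =>
      ∫ t in Set.Ioc θ (θ + 2 * Real.pi), ‖f k t‖) := by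
    have hbd : ∀ k : ℕ, (∫ t in Set.Ioc θ (θ + 2 * Real.pi), ‖f k t‖)
        ≤ (M * ‖(α⁻¹ : ℂ)‖ ^ (k + 1)) *
          (MeasureTheory.volume (Set.Ioc θ (θ + 2 * Real.pi))).toReal := by
      intro k
      have := MeasureTheory.norm_setIntegral_le_of_norm_le_const (μ := MeasureTheory.volume)
        (s := Set.Ioc θ (θ + 2 * Real.pi)) (f := fun t => ‖f k t‖)
        (C := M * ‖(α⁻¹ : ℂ)‖ ^ (k + 1)) hvol
        (fun t ht => by rw [Real.norm_eq_abs, _root_.abs_of_nonneg (norm_nonneg _)]; exact hM k t ht)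
      exact le_trans (le_abs_self _) this
    apply Summable.of_nonneg_of_le
      (fun k => MeasureTheory.integral_nonneg (fun t => norm_nonneg _)) hbd
    have : Summable (fun k : ℕ => ‖(α⁻¹ : ℂ)‖ ^ k) :=
      summable_geometric_of_lt_one (norm_nonneg _) hr
    apply Summable.congr (((this.mul_left (M * ‖(α⁻¹ : ℂ)‖ *
      (MeasureTheory.volume (Set.Ioc θ (θ + 2 * Real.pi))).toReal)))) ?_
    intro k
    rw [pow_succ]
    ring
  rw [intervalIntegral.integral_of_le hle]
  calc (∫ t in Set.Ioc θ (θ + 2 * Real.pi),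
        (Complex.exp (Complex.I * β * t) / (Complex.exp (Complex.I * t) - α)) *
          Complex.I * Complex.exp (Complex.I * t))
      = ∫ t in Set.Ioc θ (θ + 2 * Real.pi), ∑' k : ℕ, f k t := by
        apply MeasureTheory.integral_congr_ae
        filter_upwards with t using hpt t
    _ = ∑' k : ℕ, ∫ t in Set.Ioc θ (θ + 2 * Real.pi), f k t :=
        (MeasureTheory.integral_tsum_of_summable_integral_norm hint hsumnorm).symm
    _ = ∑' k : ℕ, Complex.exp (Complex.I * β * θ) * (E - 1) * (1 / β) *
          (-(β / (β + k + 1) * w ^ (k + 1))) := by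
        apply tsum_congr
        intro k
        have hβ1k : β + 1 + (k : ℂ) ≠ 0 := by
          have := hβn (k + 1); push_cast at this
          intro h; exact this (by linear_combination h)
        rw [← intervalIntegral.integral_of_le hle]
        have : ∀ t : ℝ, f k t = (-Complex.I * (α⁻¹) ^ (k + 1)) * Complex.exp (c k * t) := by
          intro t; rw [hfdef]
        rw [intervalIntegral.integral_congr (fun t _ => this t),
          intervalIntegral.integral_const_mul, integral_exp_mul_complex (hc k)]
        have e1 : Complex.exp (c k * ((θ + 2 * Real.pi : ℝ) : ℂ))
            = E * Complex.exp (c k * θ) := by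
          push_cast
          rw [mul_add, Complex.exp_add]
          have h3 : c k * (2 * (Real.pi : ℂ))
              = 2 * Real.pi * Complex.I * β + ((k + 1 : ℕ) : ℂ) * (2 * Real.pi * Complex.I) := by
            rw [hcdef]; push_cast; ring
          rw [h3, Complex.exp_add, Complex.exp_nat_mul_two_pi_mul_I, hE]
          ring
        have e2 : Complex.exp (c k * (θ : ℂ))
            = Complex.exp (Complex.I * β * θ) * Complex.exp (Complex.I * θ) ^ (k + 1) := by
          rw [← Complex.exp_nat_mul, ← Complex.exp_add]
          congr 1
          rw [hcdef]; push_cast; ring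
        rw [e1, e2]
        have hwpow : w ^ (k + 1) = (α⁻¹) ^ (k + 1) * Complex.exp (Complex.I * θ) ^ (k + 1) := by
          rw [hwdef, mul_pow]
        rw [hwpow, hcdef]
        have hαk : (α : ℂ) ^ k ≠ 0 := pow_ne_zero _ hα0
        have hD' : β + (k : ℂ) + 1 ≠ 0 := fun h => hβ1k (by linear_combination h)
        field_simp [hβ1k, hD', hαk]
        ring
    _ = Complex.exp (Complex.I * β * θ) * (E - 1) * (1 / β) *
          (1 - ∑' k : ℕ, (β / (β + k)) * w ^ k) := by
        have hsumg : Summable (fun k : ℕ => β / (β + k) * w ^ k) := aux_summable β hβn w hw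
        rw [Summable.tsum_eq_zero_add hsumg]
        have hg0 : β / (β + ((0 : ℕ) : ℂ)) * w ^ (0 : ℕ) = 1 := by
          simp [div_self hβ0]
        rw [hg0]
        have halt : (1 : ℂ) - (1 + ∑' k : ℕ, β / (β + ((k + 1 : ℕ) : ℂ)) * w ^ (k + 1))
            = ∑' k : ℕ, -(β / (β + k + 1) * w ^ (k + 1)) := by
          rw [tsum_neg]
          have he : ∀ k : ℕ, β / (β + ((k + 1 : ℕ) : ℂ)) * w ^ (k + 1)
              = β / (β + k + 1) * w ^ (k + 1) := by
            intro k; push_cast; ring_nf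
          rw [tsum_congr he]
          ring
        rw [halt, tsum_mul_left]
end

section
/- Let β be a negative integer, θ ∈ (0, 2π), and α ∈ ℂ with |α| > 1. Then ∫_θ^{θ+2π} (e^{iβt}/(e^{it} − α))·i·e^{it} dt = −2πi·α^{β}. -/
open Complex intervalIntegral Metric Real

lemma aux_ne_zero {α : ℂ} (hα : 1 < ‖α‖) {z : ℂ} (hz : z ∈ sphere (0:ℂ) 1) :
    z ≠ 0 ∧ z - α ≠ 0 ∧ α ≠ 0 := by
  rw [mem_sphere_iff_norm, sub_zero] at hz
  refine ⟨?_, ?_, ?_⟩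
  · intro h; rw [h] at hz; simp at hz
  · intro h; rw [sub_eq_zero] at h; rw [h] at hz; linarith
  · intro h; rw [h] at hα; rw [norm_zero] at hα; linarith

lemma int_inv_sub_alpha {α : ℂ} (hα : 1 < ‖α‖) :
    (∮ z in C((0:ℂ), 1), (z - α)⁻¹) = 0 := by
  apply circleIntegral_eq_zero_of_differentiable_on_off_countable zero_le_one
    Set.countable_empty
  · apply ContinuousOn.inv₀
    · fun_prop
    · intro z hz
      rw [mem_closedBall, Complex.dist_eq, sub_zero] at hz
      intro h; rw [sub_eq_zero] at h; rw [h] at hz; linarith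
  · intro z hz
    apply DifferentiableAt.inv (by fun_prop)
    rw [Set.mem_diff, mem_ball, Complex.dist_eq, sub_zero] at hz
    intro h; rw [sub_eq_zero] at h; rw [h] at hz
    have := hz.1; linarith

lemma circ_step {α : ℂ} (hα : 1 < ‖α‖) (m : ℤ) :
    (∮ z in C((0:ℂ), 1), (z - α)⁻¹ * z ^ (m - 1))
      = α⁻¹ * (∮ z in C((0:ℂ), 1), (z - α)⁻¹ * z ^ m)
        - α⁻¹ * (∮ z in C((0:ℂ), 1), z ^ (m - 1)) := by
  have hInt : ∀ k : ℤ, CircleIntegrable (fun z : ℂ => (z - α)⁻¹ * z ^ k) 0 1 := by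
    intro k
    apply ContinuousOn.circleIntegrable zero_le_one
    intro z hz
    obtain ⟨h0, hs, -⟩ := aux_ne_zero hα hz
    exact ((continuousAt_id.sub continuousAt_const).inv₀ hs).continuousWithinAt.mul
      ((continuousAt_zpow₀ z k (Or.inl h0)).continuousWithinAt)
  have hIntz : ∀ k : ℤ, CircleIntegrable (fun z : ℂ => z ^ k) 0 1 := by
    intro k
    apply ContinuousOn.circleIntegrable zero_le_one
    intro z hz
    obtain ⟨h0, -, -⟩ := aux_ne_zero hα hz
    exact (continuousAt_zpow₀ z k (Or.inl h0)).continuousWithinAt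
  have h1 : (∮ z in C((0:ℂ),1), (z - α)⁻¹ * z ^ (m - 1))
      = ∮ z in C((0:ℂ),1), (α⁻¹ * ((z - α)⁻¹ * z ^ m) - α⁻¹ * z ^ (m - 1)) := by
    apply circleIntegral.integral_congr zero_le_one
    intro z hz
    obtain ⟨h0, hs, ha0⟩ := aux_ne_zero hα hz
    simp only
    rw [zpow_sub_one₀ h0]
    field_simp
    ring
  have hInt2 : CircleIntegrable (fun z : ℂ => α⁻¹ * ((z - α)⁻¹ * z ^ m)) 0 1 := by
    apply ContinuousOn.circleIntegrable zero_le_one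
    intro z hz
    obtain ⟨h0, hs, -⟩ := aux_ne_zero hα hz
    exact continuousWithinAt_const.mul
      (((continuousAt_id.sub continuousAt_const).inv₀ hs).continuousWithinAt.mul
        ((continuousAt_zpow₀ z m (Or.inl h0)).continuousWithinAt))
  have hIntz2 : CircleIntegrable (fun z : ℂ => α⁻¹ * z ^ (m - 1)) 0 1 := by
    apply ContinuousOn.circleIntegrable zero_le_one
    intro z hz
    obtain ⟨h0, -, -⟩ := aux_ne_zero hα hz
    exact continuousWithinAt_const.mul ((continuousAt_zpow₀ z (m-1) (Or.inl h0)).continuousWithinAt)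
  rw [h1, circleIntegral.integral_sub hInt2 hIntz2,
    circleIntegral.integral_const_mul, circleIntegral.integral_const_mul]

lemma zpow_circ_zero (k : ℤ) (hk : k ≠ -1) : (∮ z in C((0:ℂ), 1), z ^ k) = 0 := by
  have h := circleIntegral.integral_sub_zpow_of_ne hk (0:ℂ) (0:ℂ) 1
  simpa using h

lemma circInt_zpow_aux {α : ℂ} (hα : 1 < ‖α‖) :
    ∀ n : ℕ, (∮ z in C((0:ℂ), 1), (z - α)⁻¹ * z ^ (-(n:ℤ) - 1))
      = -(2 * π * Complex.I) * α ^ (-(n:ℤ) - 1) := by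
  have hα0 : α ≠ 0 := by
    intro h; rw [h, norm_zero] at hα; linarith
  intro n
  induction n with
  | zero =>
    have h0 : (-(((0:ℕ)):ℤ) - 1) = (0:ℤ) - 1 := by norm_num
    rw [h0, circ_step hα 0]
    have e1 : (∮ z in C((0:ℂ),1), (z - α)⁻¹ * z ^ (0:ℤ)) = 0 := by
      have e1' : (∮ z in C((0:ℂ),1), (z - α)⁻¹ * z ^ (0:ℤ)) = ∮ z in C((0:ℂ),1), (z - α)⁻¹ := by
        apply circleIntegral.integral_congr zero_le_one
        intro z hz; simp
      rw [e1', int_inv_sub_alpha hα]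
    have e2 : (∮ z in C((0:ℂ),1), z ^ ((0:ℤ) - 1)) = 2 * π * Complex.I := by
      rw [← circleIntegral.integral_sub_center_inv (0:ℂ) (one_ne_zero : (1:ℝ) ≠ 0)]
      apply circleIntegral.integral_congr zero_le_one
      intro z hz
      simp
    rw [e1, e2, zpow_sub_one₀ hα0, zpow_zero]
    ring
  | succ n ih =>
    have hexp : (-(((n+1:ℕ)):ℤ) - 1) = (-(n:ℤ) - 1) - 1 := by push_cast; ring
    rw [hexp, circ_step hα (-(n:ℤ) - 1), ih,
      zpow_circ_zero (-(n:ℤ) - 1 - 1) (by omega),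
      show (-(n:ℤ) - 1 - 1) = (-(n:ℤ) - 1) + (-1) by ring, zpow_add₀ hα0, zpow_neg_one]
    ring

theorem stmt_7 (β : ℤ) (hβ : β < 0) (θ : ℝ) (hθ : θ ∈ Set.Ioo 0 (2 * Real.pi))
    (α : ℂ) (hα : 1 < ‖α‖) :
    ∫ t in θ..(θ + 2 * Real.pi),
        (Complex.exp (Complex.I * β * t) / (Complex.exp (Complex.I * t) - α)) *
          Complex.I * Complex.exp (Complex.I * t) =
    -(2 * Real.pi * Complex.I) * α ^ β := by
  set g : ℝ → ℂ := fun t =>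
    (Complex.exp (Complex.I * β * t) / (Complex.exp (Complex.I * t) - α)) *
      Complex.I * Complex.exp (Complex.I * t) with hg
  have hper : Function.Periodic g (2 * π) := by
    intro t
    have e1 : Complex.exp (Complex.I * ((t:ℝ) + 2*π : ℝ)) = Complex.exp (Complex.I * t) := by
      push_cast
      rw [mul_add, Complex.exp_add]
      rw [show Complex.I * (2*(π:ℂ)) = 2*π*Complex.I by ring, Complex.exp_two_pi_mul_I, mul_one]
    have e2 : Complex.exp (Complex.I * β * ((t:ℝ) + 2*π : ℝ)) = Complex.exp (Complex.I * β * t) := by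
      push_cast
      rw [mul_add, Complex.exp_add]
      rw [show Complex.I * β * (2*(π:ℂ)) = (β:ℂ) * (2*π*Complex.I) by ring,
        Complex.exp_int_mul_two_pi_mul_I, mul_one]
    simp only [hg]
    rw [e1, e2]
  have hshift : ∫ t in θ..(θ + 2 * π), g t = ∫ t in (0:ℝ)..(0 + 2*π), g t :=
    hper.intervalIntegral_add_eq θ 0
  have hcirc : ∫ t in (0:ℝ)..(0 + 2*π), g t
      = ∮ z in C((0:ℂ), 1), (z - α)⁻¹ * z ^ β := by
    rw [zero_add, circleIntegral]
    apply intervalIntegral.integral_congr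
    intro t ht
    simp only [hg, deriv_circleMap, circleMap, ofReal_one, one_mul, zero_add, smul_eq_mul]
    have e3 : Complex.exp (Complex.I * β * t) = Complex.exp ((t:ℝ) * Complex.I) ^ β := by
      rw [show (Complex.I * β * t : ℂ) = (β:ℂ) * ((t:ℝ) * Complex.I) by ring,
        Complex.exp_int_mul]
    rw [e3, show (Complex.I * (t:ℝ) : ℂ) = (t:ℝ) * Complex.I by ring, div_eq_mul_inv]
    ring
  rw [hg] at hshift ⊢
  rw [hshift, hcirc]
  have hn : β = -((-β-1).toNat : ℤ) - 1 := by omega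
  rw [hn]
  exact circInt_zpow_aux hα ((-β-1).toNat)
end

section
/- Let α ∈ ℂ with |α| < 1, β ∈ ℂ with β ∉ ℤ_{≥0}, and θ ∈ (0, 2π). Then ∫_θ^{θ+2π} (e^{iβt}/(e^{it} − α))·i·e^{it} dt = e^{iβθ}(e^{2πiβ} − 1)·∑_{k=0}^∞ (α^k/(β − k))·e^{−ikθ}. -/
open Complex intervalIntegral

theorem stmt_10 (α : ℂ) (hα : ‖α‖ < 1) (β : ℂ) (hβ : ∀ n : ℕ, β ≠ n)
    (θ : ℝ) (hθ : θ ∈ Set.Ioo 0 (2 * Real.pi)) :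
    ∫ t in θ..(θ + 2 * Real.pi),
        (Complex.exp (Complex.I * β * t) / (Complex.exp (Complex.I * t) - α)) *
          Complex.I * Complex.exp (Complex.I * t) =
    Complex.exp (Complex.I * β * θ) * (Complex.exp (2 * Real.pi * Complex.I * β) - 1) *
      ∑' k : ℕ, (α ^ k / (β - k)) * Complex.exp (-Complex.I * k * θ) := by
  set a := θ with ha0
  set b := θ + 2 * Real.pi with hb0
  have hab : a ≤ b := by simp only [hb0]; linarith [Real.two_pi_pos]
  set C : ℝ := Real.exp (|β.im| * (|θ| + 2 * Real.pi)) with hC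
  have hC0 : 0 ≤ C := (Real.exp_pos _).le
  set F : ℕ → ℝ → ℂ := fun n t => α ^ n * Complex.exp (Complex.I * (β - n) * t) * Complex.I
    with hF
  have hαn : ∀ t : ℝ, ‖α * Complex.exp (-(Complex.I * t))‖ < 1 := by
    intro t
    rw [norm_mul]
    simpa [Complex.norm_exp] using hα
  have key : ∀ t : ℝ, HasSum (fun n => F n t)
      ((Complex.exp (Complex.I * β * t) / (Complex.exp (Complex.I * t) - α)) *
        Complex.I * Complex.exp (Complex.I * t)) := by
    intro t
    have hg : HasSum (fun n : ℕ => (α * Complex.exp (-(Complex.I * t))) ^ n)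
        (1 - α * Complex.exp (-(Complex.I * t)))⁻¹ :=
      hasSum_geometric_of_norm_lt_one (by simpa using hαn t)
    have hmul := (hg.mul_left (Complex.exp (Complex.I * β * t))).mul_right Complex.I
    have hne : Complex.exp (Complex.I * t) ≠ 0 := Complex.exp_ne_zero _
    have h1 : (1 - α * Complex.exp (-(Complex.I * t))) * Complex.exp (Complex.I * t)
        = Complex.exp (Complex.I * t) - α := by
      rw [sub_mul, mul_assoc, ← Complex.exp_add]
      ring_nf
      simp
    have heq : Complex.exp (Complex.I * β * t) * (1 - α * Complex.exp (-(Complex.I * t)))⁻¹ *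
        Complex.I = (Complex.exp (Complex.I * β * t) / (Complex.exp (Complex.I * t) - α)) *
        Complex.I * Complex.exp (Complex.I * t) := by
      have h2 : (Complex.exp (Complex.I * t) - α)⁻¹ =
          (1 - α * Complex.exp (-(Complex.I * t)))⁻¹ * (Complex.exp (Complex.I * t))⁻¹ := by
        rw [← mul_inv, h1]
      rw [div_eq_mul_inv, h2]
      field_simp
    rw [← heq]
    suffices hfun : (fun n => F n t) = fun i => Complex.exp (Complex.I * β * t) * (α * Complex.exp (-(Complex.I * t))) ^ i * Complex.I by rw [hfun]; exact hmul
    funext n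
    have he : Complex.exp (Complex.I * (β - n) * t) =
        Complex.exp (Complex.I * β * t) * Complex.exp ((n : ℂ) * -(Complex.I * t)) := by
      rw [← Complex.exp_add]; congr 1; ring
    rw [hF]
    simp only [mul_pow, ← Complex.exp_nat_mul, he]
    ring
  have hnorm : ∀ n : ℕ, ∀ t : ℝ, t ∈ Set.uIoc a b → ‖F n t‖ ≤ C * ‖α‖ ^ n := by
    intro n t ht
    rw [Set.uIoc_of_le hab] at ht
    have ht1 : |t| ≤ |θ| + 2 * Real.pi := by
      rw [abs_le]
      constructor
      · have h3 : -(|θ| + 2 * Real.pi) ≤ θ := by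
          have := neg_abs_le θ
          have := Real.two_pi_pos
          linarith
        linarith [ht.1.le]
      · calc t ≤ θ + 2 * Real.pi := ht.2
          _ ≤ |θ| + 2 * Real.pi := by linarith [le_abs_self θ]
    have hval : ‖F n t‖ = ‖α‖ ^ n * Real.exp (-β.im * t) := by
      rw [hF]
      simp only [norm_mul, norm_pow, Complex.norm_I, mul_one,
        Complex.norm_exp]
      congr 2
      simp [Complex.mul_re, Complex.mul_im]
    rw [hval, mul_comm]
    gcongr
    rw [hC]
    apply Real.exp_le_exp.2
    calc -β.im * t ≤ |(-β.im) * t| := le_abs_self _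
      _ = |β.im| * |t| := by rw [abs_mul, abs_neg]
      _ ≤ |β.im| * (|θ| + 2 * Real.pi) := by gcongr
  have hsum : HasSum (fun n => ∫ t in a..b, F n t)
      (∫ t in a..b, (Complex.exp (Complex.I * β * t) / (Complex.exp (Complex.I * t) - α)) *
        Complex.I * Complex.exp (Complex.I * t)) := by
    refine intervalIntegral.hasSum_integral_of_dominated_convergence
      (fun n _ => C * ‖α‖ ^ n) (fun n => ?_) (fun n => ?_) ?_ ?_ ?_
    · apply Continuous.aestronglyMeasurable
      simp only [hF]
      fun_prop
    · exact MeasureTheory.ae_of_all _ (hnorm n)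
    · refine MeasureTheory.ae_of_all _ fun t _ => ?_
      exact (summable_geometric_of_lt_one (norm_nonneg α) hα).mul_left C
    · apply intervalIntegrable_const
    · exact MeasureTheory.ae_of_all _ fun t _ => key t
  have hint : ∀ n : ℕ, (∫ t in a..b, F n t) =
      Complex.exp (Complex.I * β * θ) * (Complex.exp (2 * Real.pi * Complex.I * β) - 1) *
        ((α ^ n / (β - n)) * Complex.exp (-Complex.I * n * θ)) := by
    intro n
    have hβn : β - n ≠ 0 := sub_ne_zero.2 (hβ n)
    have hc : Complex.I * (β - n) ≠ 0 := mul_ne_zero Complex.I_ne_zero hβn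
    have hstep : (∫ t in a..b, F n t) = (α ^ n * Complex.I) *
        ((Complex.exp (Complex.I * (β - n) * b) - Complex.exp (Complex.I * (β - n) * a)) /
          (Complex.I * (β - n))) := by
      rw [show (fun t : ℝ => F n t) =
          (fun t : ℝ => (α ^ n * Complex.I) * Complex.exp ((Complex.I * (β - n)) * (t : ℂ)))
        from funext fun t => by simp only [hF]; ring]
      rw [intervalIntegral.integral_const_mul, integral_exp_mul_complex hc]
    have h2 : Complex.exp ((-(n : ℂ)) * (2 * Real.pi * Complex.I)) = 1 := by
      have := Complex.exp_int_mul_two_pi_mul_I (-(n : ℤ))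
      push_cast at this
      exact this
    have hb : Complex.exp (Complex.I * (β - n) * b) =
        Complex.exp (Complex.I * (β - n) * a) *
          Complex.exp (2 * Real.pi * Complex.I * β) := by
      calc Complex.exp (Complex.I * (β - n) * b)
          = Complex.exp (Complex.I * (β - n) * a) *
              Complex.exp (2 * Real.pi * Complex.I * β) *
              Complex.exp ((-(n : ℂ)) * (2 * Real.pi * Complex.I)) := by
            rw [← Complex.exp_add, ← Complex.exp_add]
            congr 1
            simp only [hb0, ha0]
            push_cast
            ring
        _ = _ := by rw [h2, mul_one]
    have haθ : Complex.exp (Complex.I * (β - n) * a) =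
        Complex.exp (Complex.I * β * θ) * Complex.exp (-Complex.I * n * θ) := by
      rw [← Complex.exp_add]; congr 1; simp only [ha0]; ring
    rw [hstep, hb, haθ]
    field_simp
  rw [← hsum.tsum_eq, tsum_congr hint, tsum_mul_left]
end
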